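/- For nonnegative integers i ≥ j ≥ 1 and integers r ≥ p ≥ 0, the r-Stirling numbers of the first kind satisfy [i+r, j+r]_r = Σ_{k=j}^{i} C(k,j) [i+p, k+p]_p (r-p)^{k-j}. -/
import Mathlib


open Finset Polynomial

/-- The unsigned `r`-Stirling numbers of the first kind: `rS1 r i j = [i+r, j+r]_r`,
characterized by `∑_j [i+r, j+r]_r x^j = (x+r)(x+r+1)⋯(x+r+i-1)`. -/
def rS1 (r : ℕ) : ℕ → ℕ → ℕ
  | 0, 0 => 1
  | 0, _ + 1 => 0
  | i + 1, 0 => (r + i) * rS1 r i 0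
  | i + 1, j + 1 => (r + i) * rS1 r i (j + 1) + rS1 r i j

lemma rS1_eq_zero (r : ℕ) : ∀ i j, i < j → rS1 r i j = 0
  | 0, _ + 1, _ => rfl
  | i + 1, j + 1, h => by
    have h1 : i < j + 1 := by omega
    have h2 : i < j := by omega
    simp [rS1, rS1_eq_zero r i (j+1) h1, rS1_eq_zero r i j h2]

lemma rS1_poly (r i : ℕ) :
    (∑ j ∈ range (i+1), C (rS1 r i j) * X ^ j : ℕ[X]) =
      ∏ t ∈ range i, (X + C (r + t)) := by
  induction i with
  | zero => simp [rS1]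
  | succ i ih =>
    rw [Finset.prod_range_succ, ← ih]
    rw [Finset.sum_range_succ' _ (i+1)]
    have key : ∀ j, (C (rS1 r (i+1) (j+1)) * X ^ (j+1) : ℕ[X]) =
        C ((r+i) * rS1 r i (j+1)) * X ^ (j+1) + C (rS1 r i j) * X ^ (j+1) := by
      intro j
      rw [show rS1 r (i+1) (j+1) = (r+i) * rS1 r i (j+1) + rS1 r i j from rfl, C_add, add_mul]
    simp only [key]
    rw [Finset.sum_add_distrib]
    have h0 : rS1 r (i+1) 0 = (r+i) * rS1 r i 0 := rfl
    have hA : (∑ j ∈ range (i+1), C ((r+i) * rS1 r i (j+1)) * X ^ (j+1) : ℕ[X])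
        + C (rS1 r (i+1) 0) * X ^ 0 =
        ∑ j ∈ range (i+1), C ((r+i) * rS1 r i j) * X ^ j := by
      rw [Finset.sum_range_succ _ i, rS1_eq_zero r i (i+1) (by omega)]
      rw [Finset.sum_range_succ' (fun j => (C ((r+i) * rS1 r i j) * X ^ j : ℕ[X])) i]
      simp [h0]
    have hB : (∑ j ∈ range (i+1), C (rS1 r i j) * X ^ (j+1) : ℕ[X]) =
        (∑ j ∈ range (i+1), C (rS1 r i j) * X ^ j) * X := by
      rw [Finset.sum_mul]
      exact Finset.sum_congr rfl fun j _ => by ring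
    calc (∑ j ∈ range (i+1), C ((r+i) * rS1 r i (j+1)) * X ^ (j+1) : ℕ[X])
          + (∑ j ∈ range (i+1), C (rS1 r i j) * X ^ (j+1))
          + C (rS1 r (i+1) 0) * X ^ 0
        = ((∑ j ∈ range (i+1), C ((r+i) * rS1 r i (j+1)) * X ^ (j+1) : ℕ[X])
            + C (rS1 r (i+1) 0) * X ^ 0)
          + (∑ j ∈ range (i+1), C (rS1 r i j) * X ^ (j+1)) := by ring
      _ = (∑ j ∈ range (i+1), C ((r+i) * rS1 r i j) * X ^ j : ℕ[X])
          + (∑ j ∈ range (i+1), C (rS1 r i j) * X ^ j) * X := by rw [hA, hB]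
      _ = (∑ j ∈ range (i+1), C (rS1 r i j) * X ^ j : ℕ[X]) * (X + C (r + i)) := by
          rw [mul_add, Finset.sum_mul, Finset.sum_mul]
          have : ∀ j ∈ range (i+1), (C (rS1 r i j) * X ^ j : ℕ[X]) * C (r + i)
              = C ((r+i) * rS1 r i j) * X ^ j := fun j _ => by rw [C_mul]; ring
          rw [Finset.sum_congr rfl this]
          ring

lemma rS1_coeff (r i j : ℕ) (h : j ≤ i) :
    rS1 r i j = (∏ t ∈ range i, (X + C (r + t) : ℕ[X])).coeff j := by
  rw [← rS1_poly, finset_sum_coeff]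
  simp only [coeff_C_mul, coeff_X_pow]
  rw [Finset.sum_eq_single j (fun k _ hk => by simp [Ne.symm hk]) (fun hk => by simp at hk; omega)]
  simp

theorem rStirlingFirst_change_of_base (i j r p : ℕ) (hj : 1 ≤ j) (hij : j ≤ i) (hpr : p ≤ r) :
    rS1 r i j = ∑ k ∈ Finset.Icc j i, k.choose j * rS1 p i k * (r - p) ^ (k - j) := by
  set d := r - p with hd
  have hrd : ∀ t : ℕ, r + t = d + (p + t) := fun t => by omega
  have hcomp : (∏ t ∈ range i, (X + C (r + t) : ℕ[X])) =
      (∏ t ∈ range i, (X + C (p + t) : ℕ[X])).comp (X + C d) := by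
    rw [Polynomial.prod_comp]
    refine Finset.prod_congr rfl fun t _ => ?_
    rw [add_comp, X_comp, C_comp, hrd t, C_add]
    ring
  rw [rS1_coeff r i j hij, hcomp, ← rS1_poly p i, Polynomial.sum_comp]
  simp only [mul_comp, C_comp, pow_comp, X_comp]
  rw [finset_sum_coeff]
  simp only [coeff_C_mul, coeff_X_add_C_pow]
  rw [← Finset.sum_subset (s₁ := Finset.Icc j i) (fun k hk => by
      simp at hk ⊢; omega)
    (fun k hk hk2 => by
      have : k < j := by simp at hk hk2; omega
      simp [Nat.choose_eq_zero_of_lt this])]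
  refine Finset.sum_congr rfl fun k hk => ?_
  push_cast
  ring
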